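/- Let Δ be a reflexive polytope, μ_M and ν_N the parallel probability measures on ∂Δ and ∂Δ^∨ respectively. If ν_N is stable (the transport problem with cost c(m,n) = −⟨m,n⟩ admits an optimal plan supported on ⋃_σ σ° × Star(n_σ)°), then the volume estimates ν_N(τ) ≤ μ_M(Star(m_τ)) for every facet τ of Δ^∨ and μ_M(σ) ≤ ν_N(Star(n_σ)) for every facet σ of Δ hold. -/
import Mathlib


open MeasureTheory

/-- Stability implies the volume estimates. Abstract formulation: `μ` and `ν` are the
parallel probability measures on `∂Δ` and `∂Δ^∨`; facets of `Δ^∨` are indexed by `ι'`,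
with `A τ = Star(m_τ)°` and `B τ = τ°` (the `τ°` pairwise disjoint), and facets of `Δ`
are indexed by `ι`, with `C σ = σ°` (pairwise disjoint) and `D σ = Star(n_σ)°`. If `ν` is
stable, i.e. some coupling `γ` of `μ` and `ν` is supported on
`⋃_τ Star(m_τ)° × τ° = ⋃_σ σ° × Star(n_σ)°`, then `ν(τ°) ≤ μ(Star(m_τ)°)` for every
facet `τ` of `Δ^∨` and `μ(σ°) ≤ ν(Star(n_σ)°)` for every facet `σ` of `Δ`. -/
lemma aux_measure_le {Z : Type*} [MeasurableSpace Z] (γ : Measure Z)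
    [IsProbabilityMeasure γ] {S E F : Set Z} (hE : MeasurableSet E)
    (hF : MeasurableSet F) (hS : γ S = 1) (hSE : S ⊆ F ∪ Eᶜ) :
    γ E ≤ γ F := by
  have hT : MeasurableSet (F ∪ Eᶜ) := hF.union hE.compl
  have hT1 : γ (F ∪ Eᶜ) = 1 := le_antisymm prob_le_one (hS ▸ measure_mono hSE)
  have hTc : γ ((F ∪ Eᶜ)ᶜ) = 0 := by
    rw [measure_compl hT (measure_ne_top _ _), hT1, measure_univ, tsub_self]
  calc γ E ≤ γ (E ∩ (F ∪ Eᶜ)) + γ (E \ (F ∪ Eᶜ)) := measure_le_inter_add_diff _ _ _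
    _ ≤ γ F + 0 := by
        gcongr
        · intro z hz
          rcases hz.2 with h | h
          · exact h
          · exact absurd hz.1 h
        · rw [← hTc]
          exact measure_mono fun z hz => hz.2
    _ = γ F := add_zero _

theorem stability_implies_volume_estimates
    {X Y : Type*} [MeasurableSpace X] [MeasurableSpace Y] {ι ι' : Type*}
    (μ : Measure X) (ν : Measure Y) [IsProbabilityMeasure μ] [IsProbabilityMeasure ν]
    (γ : Measure (X × Y)) [IsProbabilityMeasure γ]
    (hγ1 : γ.map Prod.fst = μ) (hγ2 : γ.map Prod.snd = ν)
    (A : ι' → Set X) (B : ι' → Set Y) (C : ι → Set X) (D : ι → Set Y)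
    (hAmeas : ∀ τ, MeasurableSet (A τ)) (hBmeas : ∀ τ, MeasurableSet (B τ))
    (hCmeas : ∀ σ, MeasurableSet (C σ)) (hDmeas : ∀ σ, MeasurableSet (D σ))
    (hBdisj : Pairwise (Function.onFun Disjoint B))
    (hCdisj : Pairwise (Function.onFun Disjoint C))
    -- stability: an optimal plan `γ` is supported on `⋃_τ Star(m_τ)° × τ° = ⋃_σ σ° × Star(n_σ)°`
    (hsuppτ : γ (⋃ τ, A τ ×ˢ B τ) = 1)
    (hsuppσ : γ (⋃ σ, C σ ×ˢ D σ) = 1) :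
    (∀ τ, ν (B τ) ≤ μ (A τ)) ∧ (∀ σ, μ (C σ) ≤ ν (D σ)) := by
  constructor
  · intro τ
    have hνB : ν (B τ) = γ (Set.univ ×ˢ B τ) := by
      rw [← hγ2, Measure.map_apply measurable_snd (hBmeas τ)]
      congr 1
      ext p
      simp
    have hμA : μ (A τ) = γ (A τ ×ˢ Set.univ) := by
      rw [← hγ1, Measure.map_apply measurable_fst (hAmeas τ)]
      congr 1
      ext p
      simp
    rw [hνB, hμA]
    refine aux_measure_le γ (MeasurableSet.univ.prod (hBmeas τ))
      ((hAmeas τ).prod MeasurableSet.univ) hsuppτ ?_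
    rintro ⟨x, y⟩ hxy
    simp only [Set.mem_iUnion, Set.mem_prod] at hxy
    obtain ⟨τ', hx, hy⟩ := hxy
    by_cases h : y ∈ B τ
    · left
      have : τ' = τ := by
        by_contra hne
        exact (hBdisj hne).le_bot ⟨hy, h⟩
      exact ⟨this ▸ hx, trivial⟩
    · right
      simp [h]
  · intro σ
    have hμC : μ (C σ) = γ (C σ ×ˢ Set.univ) := by
      rw [← hγ1, Measure.map_apply measurable_fst (hCmeas σ)]
      congr 1
      ext p
      simp
    have hνD : ν (D σ) = γ (Set.univ ×ˢ D σ) := by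
      rw [← hγ2, Measure.map_apply measurable_snd (hDmeas σ)]
      congr 1
      ext p
      simp
    rw [hμC, hνD]
    refine aux_measure_le γ ((hCmeas σ).prod MeasurableSet.univ)
      (MeasurableSet.univ.prod (hDmeas σ)) hsuppσ ?_
    rintro ⟨x, y⟩ hxy
    simp only [Set.mem_iUnion, Set.mem_prod] at hxy
    obtain ⟨σ', hx, hy⟩ := hxy
    by_cases h : x ∈ C σ
    · left
      have : σ' = σ := by
        by_contra hne
        exact (hCdisj hne).le_bot ⟨hx, h⟩
      exact ⟨trivial, this ▸ hy⟩
    · right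
      simp [h]
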